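/- Let P_- = [[A, 0], [-D, -S]] with S = -D A^{-1} G. Then T_- = P_-^{-1} M satisfies (T_- - I)^2 = 0, i.e., T_- - I is nilpotent of index at most 2. -/
import Mathlib


open Matrix

theorem stmt_5 {n m : ℕ}
    (A : Matrix (Fin n) (Fin n) ℝ) (G : Matrix (Fin n) (Fin m) ℝ)
    (D : Matrix (Fin m) (Fin n) ℝ)
    (S : Matrix (Fin m) (Fin m) ℝ) (hSdef : S = -(D * A⁻¹ * G))
    (hA : IsUnit A.det) (hS : IsUnit S.det)
    (M Pminus Tminus : Matrix (Fin n ⊕ Fin m) (Fin n ⊕ Fin m) ℝ)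
    (hM : M = Matrix.fromBlocks A G (-D) (0 : Matrix (Fin m) (Fin m) ℝ))
    (hP : Pminus = Matrix.fromBlocks A (0 : Matrix (Fin n) (Fin m) ℝ) (-D) (-S))
    (hT : Tminus = Pminus⁻¹ * M) :
    (Tminus - 1) ^ 2 = 0 := by
  have hA1 : A * A⁻¹ = 1 := mul_nonsing_inv A hA
  have hA2 : A⁻¹ * A = 1 := nonsing_inv_mul A hA
  have hS1 : S * S⁻¹ = 1 := mul_nonsing_inv S hS
  have hS2 : S⁻¹ * S = 1 := nonsing_inv_mul S hS
  have key : S⁻¹ * D * A⁻¹ * G = -1 := by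
    rw [Matrix.mul_assoc, Matrix.mul_assoc, ← Matrix.mul_assoc D,
      show D * A⁻¹ * G = -S by rw [hSdef]; simp, Matrix.mul_neg, hS2]
  set Q : Matrix (Fin n ⊕ Fin m) (Fin n ⊕ Fin m) ℝ :=
    Matrix.fromBlocks A⁻¹ 0 (-(S⁻¹ * D * A⁻¹)) (-S⁻¹) with hQ
  have hPinv : Pminus⁻¹ = Q := by
    apply inv_eq_right_inv
    rw [hP, hQ, Matrix.fromBlocks_multiply, ← Matrix.fromBlocks_one]
    congr 1 <;>
      simp [Matrix.neg_mul, Matrix.mul_neg, ← Matrix.mul_assoc, hA1, hA2, hS1, hS2]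
  have key2 : S⁻¹ * D * A⁻¹ * A = S⁻¹ * D := by
    rw [Matrix.mul_assoc, hA2, Matrix.mul_one]
  have hTval : Tminus = Matrix.fromBlocks 1 (A⁻¹ * G) 0 1 := by
    rw [hT, hPinv, hQ, hM, Matrix.fromBlocks_multiply]
    congr 1 <;>
      simp [Matrix.neg_mul, Matrix.mul_neg, ← Matrix.mul_assoc, hA1, hA2, hS1, hS2, key, key2]
  rw [hTval, pow_two, ← Matrix.fromBlocks_one, sub_eq_add_neg, Matrix.fromBlocks_neg,
    Matrix.fromBlocks_add, Matrix.fromBlocks_multiply]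
  simp [← Matrix.fromBlocks_one]
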